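/- arXiv:1612.08979 — 2 statements merged into one kernel-verified Lean document; each statement's English description precedes it below -/
import Mathlib

section
/- Let σ be the standard two-dimensional irreducible representation of S₃ on ℂ², and let σ ⊗ σ be the representation of S₃ on ℂ² ⊗[ℂ] ℂ² given by g ↦ σ(g) ⊗ σ(g). Then the induced algebra homomorphism π_{σ⊗σ} : MonoidAlgebra ℂ S₃ → End_ℂ(ℂ² ⊗ ℂ²), sending Σ a_g·g to Σ a_g·(σ(g) ⊗ σ(g)), is injective. -/
open scoped TensorProduct

/-- Coordinate functional on the tensor square: `v ⊗ w ↦ v k * w l`. -/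
noncomputable def tensorCoord (k l : Fin 2) :
    (Fin 2 → ℂ) ⊗[ℂ] (Fin 2 → ℂ) →ₗ[ℂ] ℂ :=
  TensorProduct.lift (LinearMap.mk₂ ℂ (fun v w => v k * w l)
    (fun a b w => by simp [add_mul])
    (fun r a w => by simp [mul_assoc])
    (fun v a b => by simp [mul_add])
    (fun r v w => by simp; ring))

@[simp] lemma tensorCoord_tmul (k l : Fin 2) (v w : Fin 2 → ℂ) :
    tensorCoord k l (v ⊗ₜ w) = v k * w l := rfl

lemma mulVecLin_two (a b c d x y : ℂ) :
    Matrix.mulVecLin !![a, b; c, d] ![x, y] = ![a*x + b*y, c*x + d*y] := by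
  funext i
  fin_cases i <;>
    simp [Matrix.mulVecLin_apply, Matrix.mulVec, dotProduct, Fin.sum_univ_two]

/-- Let `σ` be the standard two-dimensional irreducible representation of `S₃` on `ℂ²`
(determined by its values on the generators `(0 1)` and `(0 1 2)`). Then the algebra
homomorphism `ℂ[S₃] → End(ℂ² ⊗ ℂ²)` induced by the tensor product representation
`σ ⊗ σ`, `g ↦ σ(g) ⊗ σ(g)`, is injective. -/
theorem tensor_square_standard_rep_faithful
    (σ : Representation ℂ (Equiv.Perm (Fin 3)) (Fin 2 → ℂ))
    (hswap : σ (Equiv.swap 0 1) = Matrix.mulVecLin !![-1, -1; 0, 1])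
    (hcycle : σ (finRotate 3) = Matrix.mulVecLin !![-1, -1; 1, 0]) :
    Function.Injective ⇑(σ.tprod σ).asAlgebraHom := by
  rw [injective_iff_map_eq_zero]
  intro x hx
  set s : Equiv.Perm (Fin 3) := Equiv.swap 0 1 with hs_def
  set c : Equiv.Perm (Fin 3) := finRotate 3 with hc_def
  -- values of σ on basis vectors
  have h1v : ∀ v : Fin 2 → ℂ, σ 1 v = v := by intro v; simp
  have hc0 : σ c ![(1:ℂ), 0] = ![-1, 1] := by
    rw [hcycle, mulVecLin_two]; norm_num
  have hc1 : σ c ![(0:ℂ), 1] = ![-1, 0] := by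
    rw [hcycle, mulVecLin_two]; norm_num
  have hcm : σ (c * c) = σ c ∘ₗ σ c := by rw [map_mul]; rfl
  have hc20 : σ (c * c) ![(1:ℂ), 0] = ![0, -1] := by
    rw [hcm]; simp only [LinearMap.comp_apply, hc0]
    rw [hcycle, mulVecLin_two]; norm_num
  have hc21 : σ (c * c) ![(0:ℂ), 1] = ![1, -1] := by
    rw [hcm]; simp only [LinearMap.comp_apply, hc1]
    rw [hcycle, mulVecLin_two]; norm_num
  have hs0 : σ s ![(1:ℂ), 0] = ![-1, 0] := by
    rw [hswap, mulVecLin_two]; norm_num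
  have hs1 : σ s ![(0:ℂ), 1] = ![-1, 1] := by
    rw [hswap, mulVecLin_two]; norm_num
  have hscm : σ (s * c) = σ s ∘ₗ σ c := by rw [map_mul]; rfl
  have hsc0 : σ (s * c) ![(1:ℂ), 0] = ![0, 1] := by
    rw [hscm]; simp only [LinearMap.comp_apply, hc0]
    rw [hswap, mulVecLin_two]; norm_num
  have hsc1 : σ (s * c) ![(0:ℂ), 1] = ![1, 0] := by
    rw [hscm]; simp only [LinearMap.comp_apply, hc1]
    rw [hswap, mulVecLin_two]; norm_num
  have hsc2m : σ (s * (c * c)) = σ s ∘ₗ σ (c * c) := by rw [map_mul]; rfl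
  have hsc20 : σ (s * (c * c)) ![(1:ℂ), 0] = ![1, -1] := by
    rw [hsc2m]; simp only [LinearMap.comp_apply, hc20]
    rw [hswap, mulVecLin_two]; norm_num
  have hsc21 : σ (s * (c * c)) ![(0:ℂ), 1] = ![0, -1] := by
    rw [hsc2m]; simp only [LinearMap.comp_apply, hc21]
    rw [hswap, mulVecLin_two]; norm_num
  -- every element of S₃ is one of six words
  have hcover : ∀ g : Equiv.Perm (Fin 3),
      g = 1 ∨ g = c ∨ g = c * c ∨ g = s ∨ g = s * c ∨ g = s * (c * c) := by decide
  -- decompose x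
  have hdecomp : x =
      (MonoidAlgebra.single 1 (x.coeff 1) + MonoidAlgebra.single c (x.coeff c) +
      MonoidAlgebra.single (c * c) (x.coeff (c * c)) + MonoidAlgebra.single s (x.coeff s) +
      MonoidAlgebra.single (s * c) (x.coeff (s * c)) +
      MonoidAlgebra.single (s * (c * c)) (x.coeff (s * (c * c))) : MonoidAlgebra ℂ (Equiv.Perm (Fin 3))) := by
    apply MonoidAlgebra.ext
    apply Finsupp.ext
    intro g
    rcases hcover g with rfl | rfl | rfl | rfl | rfl | rfl <;>
      simp only [MonoidAlgebra.coeff_add, MonoidAlgebra.coeff_single, Finsupp.add_apply, Finsupp.single_apply] <;>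
      norm_num [eq_false (show (1 : Equiv.Perm (Fin 3)) ≠ c from by decide),
        eq_false (show (1 : Equiv.Perm (Fin 3)) ≠ c * c from by decide),
        eq_false (show (1 : Equiv.Perm (Fin 3)) ≠ s from by decide),
        eq_false (show (1 : Equiv.Perm (Fin 3)) ≠ s * c from by decide),
        eq_false (show (1 : Equiv.Perm (Fin 3)) ≠ s * (c * c) from by decide),
        eq_false (show (c : Equiv.Perm (Fin 3)) ≠ 1 from by decide),
        eq_false (show (c : Equiv.Perm (Fin 3)) ≠ c * c from by decide),
        eq_false (show (c : Equiv.Perm (Fin 3)) ≠ s from by decide),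
        eq_false (show (c : Equiv.Perm (Fin 3)) ≠ s * c from by decide),
        eq_false (show (c : Equiv.Perm (Fin 3)) ≠ s * (c * c) from by decide),
        eq_false (show (c * c : Equiv.Perm (Fin 3)) ≠ 1 from by decide),
        eq_false (show (c * c : Equiv.Perm (Fin 3)) ≠ c from by decide),
        eq_false (show (c * c : Equiv.Perm (Fin 3)) ≠ s from by decide),
        eq_false (show (c * c : Equiv.Perm (Fin 3)) ≠ s * c from by decide),
        eq_false (show (c * c : Equiv.Perm (Fin 3)) ≠ s * (c * c) from by decide),
        eq_false (show (s : Equiv.Perm (Fin 3)) ≠ 1 from by decide),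
        eq_false (show (s : Equiv.Perm (Fin 3)) ≠ c from by decide),
        eq_false (show (s : Equiv.Perm (Fin 3)) ≠ c * c from by decide),
        eq_false (show (s : Equiv.Perm (Fin 3)) ≠ s * c from by decide),
        eq_false (show (s : Equiv.Perm (Fin 3)) ≠ s * (c * c) from by decide),
        eq_false (show (s * c : Equiv.Perm (Fin 3)) ≠ 1 from by decide),
        eq_false (show (s * c : Equiv.Perm (Fin 3)) ≠ c from by decide),
        eq_false (show (s * c : Equiv.Perm (Fin 3)) ≠ c * c from by decide),
        eq_false (show (s * c : Equiv.Perm (Fin 3)) ≠ s from by decide),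
        eq_false (show (s * c : Equiv.Perm (Fin 3)) ≠ s * (c * c) from by decide),
        eq_false (show (s * (c * c) : Equiv.Perm (Fin 3)) ≠ 1 from by decide),
        eq_false (show (s * (c * c) : Equiv.Perm (Fin 3)) ≠ c from by decide),
        eq_false (show (s * (c * c) : Equiv.Perm (Fin 3)) ≠ c * c from by decide),
        eq_false (show (s * (c * c) : Equiv.Perm (Fin 3)) ≠ s from by decide),
        eq_false (show (s * (c * c) : Equiv.Perm (Fin 3)) ≠ s * c from by decide)]
  -- the applied form
  have happ : ∀ v w : Fin 2 → ℂ,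
      (σ.tprod σ).asAlgebraHom x (v ⊗ₜ[ℂ] w) =
        x.coeff 1 • (σ 1 v ⊗ₜ[ℂ] σ 1 w) + x.coeff c • (σ c v ⊗ₜ[ℂ] σ c w) +
        x.coeff (c * c) • (σ (c * c) v ⊗ₜ[ℂ] σ (c * c) w) +
        x.coeff s • (σ s v ⊗ₜ[ℂ] σ s w) + x.coeff (s * c) • (σ (s * c) v ⊗ₜ[ℂ] σ (s * c) w) +
        x.coeff (s * (c * c)) • (σ (s * (c * c)) v ⊗ₜ[ℂ] σ (s * (c * c)) w) := by
    intro v w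
    conv_lhs => rw [hdecomp]
    simp only [map_add, Representation.asAlgebraHom_single, LinearMap.add_apply,
      LinearMap.smul_apply, Representation.tprod_apply, TensorProduct.map_tmul]
  have hzero : ∀ (v w : Fin 2 → ℂ) (k l : Fin 2),
      tensorCoord k l ((σ.tprod σ).asAlgebraHom x (v ⊗ₜ[ℂ] w)) = 0 := by
    intro v w k l; rw [hx]; simp only [LinearMap.zero_apply, map_zero]
  have key : ∀ (k l : Fin 2) (v w : Fin 2 → ℂ),
      x.coeff 1 * ((σ 1 v) k * (σ 1 w) l) + x.coeff c * ((σ c v) k * (σ c w) l) +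
      x.coeff (c * c) * ((σ (c * c) v) k * (σ (c * c) w) l) +
      x.coeff s * ((σ s v) k * (σ s w) l) +
      x.coeff (s * c) * ((σ (s * c) v) k * (σ (s * c) w) l) +
      x.coeff (s * (c * c)) * ((σ (s * (c * c)) v) k * (σ (s * (c * c)) w) l) = 0 := by
    intro k l v w
    have h := hzero v w k l
    rw [happ] at h
    simpa only [map_add, map_smul, tensorCoord_tmul, smul_eq_mul] using h
  -- six explicit equations
  have E1 := key 0 0 ![(1:ℂ), 0] ![(1:ℂ), 0]
  have E2 := key 0 1 ![(1:ℂ), 0] ![(1:ℂ), 0]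
  have E3 := key 1 1 ![(1:ℂ), 0] ![(1:ℂ), 0]
  have E4 := key 0 0 ![(1:ℂ), 0] ![(0:ℂ), 1]
  have E5 := key 0 1 ![(1:ℂ), 0] ![(0:ℂ), 1]
  have E6 := key 1 0 ![(1:ℂ), 0] ![(0:ℂ), 1]
  rw [h1v, hc0, hc20, hs0, hsc0, hsc20] at E1 E2 E3
  rw [h1v, h1v, hc0, hc1, hc20, hc21, hs0, hs1, hsc0, hsc1, hsc20, hsc21] at E4 E5 E6
  simp only [Matrix.cons_val_zero, Matrix.cons_val_one, Matrix.head_cons] at E1 E2 E3 E4 E5 E6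
  ring_nf at E1 E2 E3 E4 E5 E6
  apply MonoidAlgebra.ext
  apply Finsupp.ext
  intro g
  show x.coeff g = 0
  rcases hcover g with rfl | rfl | rfl | rfl | rfl | rfl
  · linear_combination (2/3 : ℂ) * E1 + (1/3 : ℂ) * E2 - (1/3 : ℂ) * E4 + (1/3 : ℂ) * E5
  · linear_combination (-1/3 : ℂ) * E1 - (2/3 : ℂ) * E2 + (2/3 : ℂ) * E4 + (1/3 : ℂ) * E5
  · linear_combination (1/6 : ℂ) * E1 + (5/6 : ℂ) * E2 + (1/2 : ℂ) * E3 - (1/3 : ℂ) * E4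
      - (1/6 : ℂ) * E5 - (1/2 : ℂ) * E6
  · linear_combination (1/3 : ℂ) * E1 + (2/3 : ℂ) * E2 + (1/3 : ℂ) * E4 - (1/3 : ℂ) * E5
  · linear_combination (-1/6 : ℂ) * E1 + (1/6 : ℂ) * E2 + (1/2 : ℂ) * E3 + (1/3 : ℂ) * E4
      + (1/6 : ℂ) * E5 + (1/2 : ℂ) * E6
  · linear_combination (1/3 : ℂ) * E1 - (1/3 : ℂ) * E2 - (2/3 : ℂ) * E4 - (1/3 : ℂ) * E5
end

section
/- Let G be an infinite group (with the discrete topology) and let ℓ²(G) = lp (fun _ : G => ℂ) 2. For g ∈ G let λ_g denote the bounded operator on ℓ²(G) given by left translation, (λ_g ξ)(h) = ξ(g⁻¹h). Let A be the topological closure of the star-subalgebra of bounded operators on ℓ²(G) generated by {λ_g : g ∈ G}. If T ∈ A and T is a compact operator, then T = 0. -/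
open scoped ENNReal
open Filter
open scoped Pointwise

noncomputable section

namespace RGCstarAux

variable {G : Type} [Group G] [DecidableEq G]

def δ (g : G) : lp (fun _ : G => ℂ) 2 := lp.single 2 g 1

lemma δ_apply (g x : G) : (δ g : ∀ _ : G, ℂ) x = if x = g then 1 else 0 := by
  rw [δ, lp.single_apply]; split_ifs with h <;> simp [h]

lemma inner_δ_left (g : G) (ξ : lp (fun _ : G => ℂ) 2) : (inner ℂ (δ g) ξ : ℂ) = ξ g := by
  rw [δ, lp.inner_single_left]; simp [RCLike.inner_apply]

lemma norm_δ (g : G) : ‖(δ g : lp (fun _ : G => ℂ) 2)‖ = 1 := by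
  have := lp.norm_single (p := 2) (E := fun _ : G => ℂ) (by norm_num) g (1:ℂ)
  simpa [δ] using this

/-- the diagonal matrix-entry functional `S ↦ ⟪δ g, S (δ g)⟫`. -/
def φ (g : G) : ((lp (fun _ : G => ℂ) 2 →L[ℂ] lp (fun _ : G => ℂ) 2)) →L[ℂ] ℂ :=
  (innerSL ℂ (δ g)).comp (ContinuousLinearMap.apply ℂ _ (δ g))

lemma φ_apply (g : G) (S : lp (fun _ : G => ℂ) 2 →L[ℂ] lp (fun _ : G => ℂ) 2) :
    φ g S = (inner ℂ (δ g) (S (δ g)) : ℂ) := rfl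

section lam

variable (lam : G → (lp (fun _ : G => ℂ) 2 →L[ℂ] lp (fun _ : G => ℂ) 2))
variable (hlam : ∀ (g : G) (ξ : lp (fun _ : G => ℂ) 2) (h : G),
  (lam g ξ : ∀ _ : G, ℂ) h = ξ (g⁻¹ * h))

include hlam

lemma lam_δ (g h : G) : lam g (δ h) = δ (g * h) := by
  apply lp.ext; funext x
  rw [hlam, δ_apply, δ_apply]
  congr 1
  simp [eq_comm, mul_comm, eq_inv_mul_iff_mul_eq, eq_mul_inv_iff_mul_eq]

lemma lam_mul (g h : G) : lam g * lam h = lam (g * h) := by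
  ext ξ : 1
  apply lp.ext; funext x
  show (lam g (lam h ξ) : ∀ _ : G, ℂ) x = _
  rw [hlam, hlam, hlam]
  congr 1; group

lemma lam_one : lam 1 = 1 := by
  ext ξ : 1
  apply lp.ext; funext x
  show (lam 1 ξ : ∀ _ : G, ℂ) x = ξ x
  rw [hlam]; simp

lemma star_lam (g : G) : star (lam g) = lam g⁻¹ := by
  rw [ContinuousLinearMap.star_eq_adjoint]
  symm
  rw [ContinuousLinearMap.eq_adjoint_iff]
  intro ξ η
  rw [lp.inner_eq_tsum, lp.inner_eq_tsum]
  rw [← (Equiv.mulLeft g).tsum_eq (fun x => (inner ℂ (ξ x) ((lam g η : ∀ _ : G, ℂ) x) : ℂ))]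
  congr 1
  funext x
  simp only [Equiv.coe_mulLeft]
  rw [hlam, hlam]
  congr 2
  · group
  · group

lemma span_lam_mul_mem {x y : lp (fun _ : G => ℂ) 2 →L[ℂ] lp (fun _ : G => ℂ) 2}
    (hx : x ∈ Submodule.span ℂ (Set.range lam))
    (hy : y ∈ Submodule.span ℂ (Set.range lam)) :
    x * y ∈ Submodule.span ℂ (Set.range lam) := by
  have key : ∀ g : G, ∀ y ∈ Submodule.span ℂ (Set.range lam),
      lam g * y ∈ Submodule.span ℂ (Set.range lam) := by
    intro g y hy
    induction hy using Submodule.span_induction with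
    | mem z hz =>
        obtain ⟨h, rfl⟩ := hz
        rw [lam_mul lam hlam]
        exact Submodule.subset_span ⟨g * h, rfl⟩
    | zero => simpa using Submodule.zero_mem _
    | add a b _ _ iha ihb => rw [mul_add]; exact add_mem iha ihb
    | smul c a _ iha => rw [mul_smul_comm]; exact Submodule.smul_mem _ _ iha
  induction hx using Submodule.span_induction with
  | mem z hz => obtain ⟨g, rfl⟩ := hz; exact key g y hy
  | zero => simpa using Submodule.zero_mem _
  | add a b _ _ iha ihb => rw [add_mul]; exact add_mem iha ihb
  | smul c a _ iha => rw [smul_mul_assoc]; exact Submodule.smul_mem _ _ iha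

lemma adjoin_mem_span {a : lp (fun _ : G => ℂ) 2 →L[ℂ] lp (fun _ : G => ℂ) 2}
    (ha : a ∈ StarAlgebra.adjoin ℂ (Set.range lam)) :
    a ∈ Submodule.span ℂ (Set.range lam) := by
  induction ha using StarAlgebra.adjoin_induction with
  | mem x hx => exact Submodule.subset_span hx
  | algebraMap r =>
      have h1 : (algebraMap ℂ _) r = r • lam 1 := by
        rw [lam_one lam hlam, Algebra.algebraMap_eq_smul_one]
      rw [h1]
      exact Submodule.smul_mem _ _ (Submodule.subset_span ⟨1, rfl⟩)
  | add x y hx hy ihx ihy => exact add_mem ihx ihy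
  | mul x y hx hy ihx ihy => exact span_lam_mul_mem lam hlam ihx ihy
  | star x hx ihx =>
      clear hx
      induction ihx using Submodule.span_induction with
      | mem z hz =>
          obtain ⟨g, rfl⟩ := hz
          rw [star_lam lam hlam]
          exact Submodule.subset_span ⟨g⁻¹, rfl⟩
      | zero => simpa using Submodule.zero_mem _
      | add a b _ _ iha ihb => rw [star_add]; exact add_mem iha ihb
      | smul c a _ iha => rw [star_smul]; exact Submodule.smul_mem _ _ iha

lemma φ_lam (g k : G) : φ g (lam k) = if k = 1 then 1 else 0 := by
  rw [φ_apply, lam_δ lam hlam, inner_δ_left, δ_apply]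
  by_cases h : k = 1
  · subst h; simp
  · rw [if_neg h, if_neg]
    intro hcon
    exact h (mul_eq_right.mp hcon.symm)

lemma φ_const_on_closure (g : G)
    {S : lp (fun _ : G => ℂ) 2 →L[ℂ] lp (fun _ : G => ℂ) 2}
    (hS : S ∈ (StarAlgebra.adjoin ℂ (Set.range lam)).topologicalClosure) :
    φ g S = φ 1 S := by
  have heq : Set.EqOn (φ g) (φ (1 : G)) (Set.range lam) := by
    rintro _ ⟨k, rfl⟩
    rw [φ_lam lam hlam, φ_lam lam hlam]
  have hspan : Set.EqOn (φ g) (φ (1 : G))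
      (Submodule.span ℂ (Set.range lam) : Set _) :=
    LinearMap.eqOn_span' heq
  have hadj : Set.EqOn (φ g) (φ (1 : G))
      ((StarAlgebra.adjoin ℂ (Set.range lam) :
        StarSubalgebra ℂ (lp (fun _ : G => ℂ) 2 →L[ℂ] lp (fun _ : G => ℂ) 2)) : Set _) :=
    fun x hx => hspan (adjoin_mem_span lam hlam hx)
  have hcl : Set.EqOn (φ g) (φ (1 : G))
      (closure ((StarAlgebra.adjoin ℂ (Set.range lam) :
        StarSubalgebra ℂ (lp (fun _ : G => ℂ) 2 →L[ℂ] lp (fun _ : G => ℂ) 2)) : Set _)) :=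
    hadj.closure (φ g).continuous (φ (1 : G)).continuous
  exact hcl hS

end lam

lemma eval_continuous (x : G) :
    Continuous (fun ξ : lp (fun _ : G => ℂ) 2 => (ξ : ∀ _ : G, ℂ) x) := by
  apply LipschitzWith.continuous (K := 1)
  apply LipschitzWith.of_dist_le_mul
  intro ξ η
  rw [dist_eq_norm, dist_eq_norm]
  push_cast
  rw [one_mul]
  have : (ξ : ∀ _ : G, ℂ) x - η x = ((ξ - η : lp (fun _ : G => ℂ) 2) : ∀ _ : G, ℂ) x := by
    simp
  rw [this]
  exact lp.norm_apply_le_norm (by norm_num) _ x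

/-- evaluation at a coordinate as a continuous linear map. -/
def evalCLM (x : G) : lp (fun _ : G => ℂ) 2 →L[ℂ] ℂ :=
  ⟨{ toFun := fun ξ => (ξ : ∀ _ : G, ℂ) x
     map_add' := fun ξ η => by simp
     map_smul' := fun c ξ => by simp }, eval_continuous x⟩

@[simp] lemma evalCLM_apply (x : G) (ξ : lp (fun _ : G => ℂ) 2) :
    evalCLM x ξ = (ξ : ∀ _ : G, ℂ) x := rfl

lemma coord_tendsto_cofinite (η : lp (fun _ : G => ℂ) 2) :
    Filter.Tendsto (fun x : G => (η : ∀ _ : G, ℂ) x) Filter.cofinite (nhds 0) := by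
  rw [tendsto_zero_iff_norm_tendsto_zero]
  have hsum : Summable (fun x : G => ‖(η : ∀ _ : G, ℂ) x‖ ^ (2 : ℝ≥0∞).toReal) :=
    (memℓp_gen_iff (by norm_num)).mp (lp.memℓp η)
  have h2 := hsum.tendsto_cofinite_zero
  have h3 := (Real.continuous_sqrt.tendsto 0).comp h2
  simp only [Real.sqrt_zero] at h3
  convert h3 using 2 with x
  simp only [Function.comp_apply]
  rw [show ((2 : ℝ≥0∞).toReal) = (2 : ℝ) by norm_num]
  rw [show ‖(η : ∀ _ : G, ℂ) x‖ ^ (2:ℝ) = ‖(η : ∀ _ : G, ℂ) x‖ ^ (2:ℕ) by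
    rw [← Real.rpow_natCast]; norm_num]
  rw [Real.sqrt_sq (norm_nonneg _)]

variable [Infinite G]

lemma compact_diag_const_zero {c : ℂ}
    (S : lp (fun _ : G => ℂ) 2 →L[ℂ] lp (fun _ : G => ℂ) 2) (hS : IsCompactOperator S)
    (hc : ∀ g : G, (inner ℂ (δ g) (S (δ g)) : ℂ) = c) : c = 0 := by
  obtain ⟨K, hK, hKmem⟩ := hS
  obtain ⟨ε, hε, hball⟩ := Metric.mem_nhds_iff.mp hKmem
  set e : ℕ ↪ G := Infinite.natEmbedding G
  set u : ℕ → lp (fun _ : G => ℂ) 2 := fun n => S (δ (e n)) with hu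
  -- u n lies in the compact set (ε/2)⁻¹ • K
  set c₀ : ℂ := ((ε / 2 : ℝ) : ℂ) with hc₀
  have hc₀ne : c₀ ≠ 0 := by
    simp [hc₀]
    positivity
  have hK' : IsCompact (c₀⁻¹ • K) := hK.smul c₀⁻¹
  have hmem : ∀ n, u n ∈ c₀⁻¹ • K := by
    intro n
    have h1 : c₀ • δ (e n) ∈ Metric.ball (0 : lp (fun _ : G => ℂ) 2) ε := by
      rw [Metric.mem_ball, dist_zero_right, norm_smul, norm_δ]
      simp [hc₀, abs_of_pos hε]
      linarith
    have h2 : S (c₀ • δ (e n)) ∈ K := hball h1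
    rw [map_smul] at h2
    exact ⟨c₀ • u n, h2, by
      show c₀⁻¹ • (c₀ • u n) = u n
      rw [smul_smul, inv_mul_cancel₀ hc₀ne, one_smul]⟩
  obtain ⟨y, _, φs, hφs, hy⟩ := hK'.tendsto_subseq hmem
  -- y = 0
  have hy0 : y = 0 := by
    apply lp.ext; funext x
    have lim1 : Filter.Tendsto (fun n => ((u (φs n)) : ∀ _ : G, ℂ) x)
        Filter.atTop (nhds ((y : ∀ _ : G, ℂ) x)) :=
      ((eval_continuous x).tendsto y).comp hy
    -- Riesz representation of ξ ↦ (S ξ) x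
    set L : lp (fun _ : G => ℂ) 2 →L[ℂ] ℂ := (evalCLM x).comp S with hL
    set η : lp (fun _ : G => ℂ) 2 := (InnerProductSpace.toDual ℂ _).symm L with hη
    have hcoord : ∀ m, ((u m : ∀ _ : G, ℂ)) x = (starRingEnd ℂ) ((η : ∀ _ : G, ℂ) (e m)) := by
      intro m
      have h1 : ((u m : ∀ _ : G, ℂ)) x = L (δ (e m)) := rfl
      rw [h1, ← InnerProductSpace.toDual_symm_apply, ← hη, δ, lp.inner_single_right]
      simp [RCLike.inner_apply]
    have hinj : Filter.Tendsto (fun n => e (φs n)) Filter.atTop Filter.cofinite := by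
      rw [← Nat.cofinite_eq_atTop]
      exact (e.injective.comp hφs.injective).tendsto_cofinite
    have lim2 : Filter.Tendsto (fun n => ((u (φs n)) : ∀ _ : G, ℂ) x)
        Filter.atTop (nhds 0) := by
      simp only [hcoord]
      have h0 := ((coord_tendsto_cofinite η).comp hinj)
      simpa [Function.comp_def] using ((Complex.continuous_conj.tendsto 0).comp h0)
    exact tendsto_nhds_unique lim1 lim2
  have hnorm : Filter.Tendsto (fun n => ‖u (φs n)‖) Filter.atTop (nhds 0) := by
    rw [hy0] at hy
    simpa [Function.comp_def] using (continuous_norm.tendsto (0 : lp (fun _ : G => ℂ) 2)).comp hy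
  have hbound : ∀ n, ‖c‖ ≤ ‖u (φs n)‖ := by
    intro n
    rw [← hc (e (φs n))]
    calc ‖(inner ℂ (δ (e (φs n))) (u (φs n)) : ℂ)‖
        ≤ ‖δ (e (φs n))‖ * ‖u (φs n)‖ := norm_inner_le_norm _ _
      _ = ‖u (φs n)‖ := by rw [norm_δ, one_mul]
  exact norm_le_zero_iff.mp (ge_of_tendsto' hnorm hbound)

end RGCstarAux

end

open RGCstarAux in
/-- Let `G` be an infinite discrete group and let `λ_g` be the left-translation
unitaries on `ℓ²(G)`, `(λ_g ξ)(h) = ξ(g⁻¹ h)`. Any compact operator belonging to the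
closure of the star-algebra generated by `{λ_g : g ∈ G}` (i.e. to the reduced group
C*-algebra of `G` acting on `ℓ²(G)`) is zero. -/
theorem reduced_group_Cstar_algebra_meets_compacts_trivially
    (G : Type) [Group G] [Infinite G]
    (lam : G → (lp (fun _ : G => ℂ) 2 →L[ℂ] lp (fun _ : G => ℂ) 2))
    (hlam : ∀ (g : G) (ξ : lp (fun _ : G => ℂ) 2) (h : G), (lam g ξ : ∀ _ : G, ℂ) h = ξ (g⁻¹ * h))
    (T : lp (fun _ : G => ℂ) 2 →L[ℂ] lp (fun _ : G => ℂ) 2)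
    (hT : T ∈ (StarAlgebra.adjoin ℂ (Set.range lam)).topologicalClosure)
    (hTcompact : IsCompactOperator T) :
    T = 0 := by
  classical
  -- Step 1: all matrix entries of `T` vanish.
  have entry : ∀ g h : G, ((T (δ h) : ∀ _ : G, ℂ)) g = 0 := by
    intro g h
    set S := lam g⁻¹ * (T * lam h) with hS
    have hmemlam : ∀ k : G, lam k ∈ (StarAlgebra.adjoin ℂ (Set.range lam)).topologicalClosure :=
      fun k => StarSubalgebra.le_topologicalClosure _ (StarAlgebra.subset_adjoin ℂ _ ⟨k, rfl⟩)
    have hSmem : S ∈ (StarAlgebra.adjoin ℂ (Set.range lam)).topologicalClosure :=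
      mul_mem (hmemlam g⁻¹) (mul_mem hT (hmemlam h))
    have hScompact : IsCompactOperator S := by
      have h1 : IsCompactOperator (⇑T ∘ ⇑(lam h)) := hTcompact.comp_clm (lam h)
      have h2 : IsCompactOperator (⇑(lam g⁻¹) ∘ (⇑T ∘ ⇑(lam h))) :=
        h1.continuous_comp (lam g⁻¹).continuous
      exact h2
    have hdiag : ∀ k : G, (inner ℂ (δ k) (S (δ k)) : ℂ) = inner ℂ (δ (1:G)) (S (δ 1)) := by
      intro k
      have := φ_const_on_closure lam hlam k hSmem
      rwa [φ_apply, φ_apply] at this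
    have hzero : (inner ℂ (δ (1:G)) (S (δ 1)) : ℂ) = 0 :=
      compact_diag_const_zero S hScompact hdiag
    have hSδ : S (δ (1:G)) = lam g⁻¹ (T (δ h)) := by
      show lam g⁻¹ (T (lam h (δ 1))) = _
      rw [lam_δ lam hlam, mul_one]
    rw [hSδ, inner_δ_left, hlam] at hzero
    simpa using hzero
  -- Step 2: the adjoint kills all basis vectors.
  have hadj : ∀ g : G, (ContinuousLinearMap.adjoint T) (δ g) = 0 := by
    intro g
    apply lp.ext; funext h
    have h1 : (inner ℂ ((ContinuousLinearMap.adjoint T) (δ g)) (δ h) : ℂ)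
        = inner ℂ (δ g) (T (δ h)) :=
      ContinuousLinearMap.adjoint_inner_left T (δ h) (δ g)
    have h2 : (inner ℂ (δ g) (T (δ h)) : ℂ) = 0 := by
      rw [inner_δ_left]; exact entry g h
    rw [h2] at h1
    simp only [δ] at h1
    rw [lp.inner_single_right, RCLike.inner_apply, one_mul] at h1
    have := map_eq_zero (starRingEnd ℂ) |>.mp h1
    simpa [δ] using this
  -- Step 3: conclude `T = 0`.
  refine ContinuousLinearMap.ext fun ξ => ?_
  refine lp.ext (funext fun g => ?_)
  have h2 : (inner ℂ ((ContinuousLinearMap.adjoint T) (δ g)) ξ : ℂ) = inner ℂ (δ g) (T ξ) :=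
    ContinuousLinearMap.adjoint_inner_left T ξ (δ g)
  rw [hadj g, inner_zero_left] at h2
  have h3 : ((T ξ : ∀ _ : G, ℂ)) g = 0 := by rw [← inner_δ_left g (T ξ), ← h2]
  simpa using h3
end
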